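/- A formula A of L is a DI9 logical consequence of a set Γ of formulas of L if and only if, for every DI9 valuation α for L, if α*(B) = T for all elements B of Γ then α*(A) = T. -/

import Mathlib

/-- Formulas of the propositional language L: countably many atoms,
negation, and disjunction. -/
inductive Form : Type
  | atom : ℕ → Form
  | neg : Form → Form
  | disj : Form → Form → Form

/-- The three values: the truth values `T`, `F`, and the value `O`
(absence of truth value). -/
inductive Val3 : Type
  | T : Val3
  | F : Val3
  | O : Val3
  deriving DecidableEq

/-- A DI9 valuation for L: a function from (atomic formula, real number)
to {T, F, O} satisfying persistence of truth values and weak bivalence. -/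
structure DI9Val where
  val : ℕ → ℝ → Val3
  mono_T : ∀ (n : ℕ) (j h : ℝ), j < h → val n j = Val3.T → val n h = Val3.T
  mono_F : ∀ (n : ℕ) (j h : ℝ), j < h → val n j = Val3.F → val n h = Val3.F
  eventually_tv : ∀ n : ℕ, ∃ j : ℝ, val n j = Val3.T ∨ val n j = Val3.F

-- The DI9 classical interpretation α* associated to a DI9 valuation α.
open Classical in
noncomputable def cstar (α : DI9Val) : Form → Val3
  | .atom n => if ∃ j : ℝ, α.val n j = Val3.T then Val3.T else Val3.F
  | .neg B => if cstar α B = Val3.F then Val3.T else Val3.F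
  | .disj B C => if cstar α B = Val3.T ∨ cstar α C = Val3.T then Val3.T else Val3.F

/-- β is a j-extension of α: they agree on all atomic formulas at all times ≤ j. -/
def IsJExt (β α : DI9Val) (j : ℝ) : Prop :=
  ∀ (n : ℕ) (h : ℝ), h ≤ j → β.val n h = α.val n h

-- The DI9 interpretation Iα associated to a DI9 valuation α.
open Classical in
noncomputable def interp (α : DI9Val) : Form → ℝ → Val3
  | .atom n, j => α.val n j
  | .neg B, j =>
      match interp α B j with
      | Val3.T => Val3.F
      | Val3.F => Val3.T
      | Val3.O => Val3.O
  | .disj B C, j =>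
      if ∀ β : DI9Val, IsJExt β α j → (cstar β B = Val3.T ∨ cstar β C = Val3.T) then
        Val3.T
      else if ∀ β : DI9Val, IsJExt β α j → (cstar β B = Val3.F ∧ cstar β C = Val3.F) then
        Val3.F
      else Val3.O

/-- A classical interpretation for L. -/
structure ClassInterp where
  val : Form → Val3
  tv : ∀ A : Form, val A = Val3.T ∨ val A = Val3.F
  neg_iff : ∀ B : Form, val (.neg B) = Val3.T ↔ val B = Val3.F
  disj_iff : ∀ B C : Form, val (.disj B C) = Val3.T ↔
    (val B = Val3.T ∨ val C = Val3.T)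

/-- A is a tautological consequence of Γ in the sense of classical semantics. -/
def TautConseq (Γ : Set Form) (A : Form) : Prop :=
  ∀ Ic : ClassInterp, (∀ B ∈ Γ, Ic.val B = Val3.T) → Ic.val A = Val3.T

/-- A is a DI9 logical consequence of Γ. -/
def DI9Conseq (Γ : Set Form) (A : Form) : Prop :=
  ∀ (j : ℝ) (α : DI9Val), (∀ B ∈ Γ, interp α B j = Val3.T) → interp α A j = Val3.T

open Classical in
lemma cstar_atom_def (α : DI9Val) (n : ℕ) :
    cstar α (.atom n) = if ∃ j : ℝ, α.val n j = Val3.T then Val3.T else Val3.F := rfl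

lemma interp_atom_def (α : DI9Val) (n : ℕ) (j : ℝ) :
    interp α (.atom n) j = α.val n j := rfl

lemma interp_neg_def (α : DI9Val) (B : Form) (j : ℝ) :
    interp α (.neg B) j = (match interp α B j with
      | Val3.T => Val3.F
      | Val3.F => Val3.T
      | Val3.O => Val3.O) := rfl

open Classical in
lemma interp_disj_def (α : DI9Val) (B C : Form) (j : ℝ) :
    interp α (.disj B C) j =
      (if ∀ β : DI9Val, IsJExt β α j → (cstar β B = Val3.T ∨ cstar β C = Val3.T) then
        Val3.T
      else if ∀ β : DI9Val, IsJExt β α j → (cstar β B = Val3.F ∧ cstar β C = Val3.F) then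
        Val3.F
      else Val3.O) := rfl

lemma cstar_neg_def (α : DI9Val) (B : Form) :
    cstar α (.neg B) = if cstar α B = Val3.F then Val3.T else Val3.F := rfl

lemma cstar_disj_def (α : DI9Val) (B C : Form) :
    cstar α (.disj B C) =
      if cstar α B = Val3.T ∨ cstar α C = Val3.T then Val3.T else Val3.F := rfl

-- auxiliary lemmas
lemma val_T_le (α : DI9Val) (n : ℕ) {h j : ℝ} (hhj : h ≤ j)
    (hT : α.val n h = Val3.T) : α.val n j = Val3.T := by
  rcases hhj.lt_or_eq with h' | h'
  · exact α.mono_T n h j h' hT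
  · rwa [h'] at hT

lemma val_F_le (α : DI9Val) (n : ℕ) {h j : ℝ} (hhj : h ≤ j)
    (hF : α.val n h = Val3.F) : α.val n j = Val3.F := by
  rcases hhj.lt_or_eq with h' | h'
  · exact α.mono_F n h j h' hF
  · rwa [h'] at hF

lemma cstar_tv (α : DI9Val) : ∀ A : Form, cstar α A = Val3.T ∨ cstar α A = Val3.F := by
  intro A
  induction A with
  | atom n => rw [cstar_atom_def]; split <;> simp
  | neg B ih => rw [cstar_neg_def]; split <;> simp
  | disj B C ih1 ih2 => rw [cstar_disj_def]; split <;> simp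

lemma cstar_atom_T (α : DI9Val) (n : ℕ) :
    cstar α (.atom n) = Val3.T ↔ ∃ j : ℝ, α.val n j = Val3.T := by
  rw [cstar_atom_def]; split <;> simp_all

lemma cstar_neg_T (α : DI9Val) (B : Form) :
    cstar α (.neg B) = Val3.T ↔ cstar α B = Val3.F := by
  rw [cstar_neg_def]; split <;> simp_all

lemma cstar_neg_F (α : DI9Val) (B : Form) :
    cstar α (.neg B) = Val3.F ↔ cstar α B = Val3.T := by
  rw [cstar_neg_def]; rcases cstar_tv α B with h | h <;> simp [h]

lemma cstar_disj_T (α : DI9Val) (B C : Form) :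
    cstar α (.disj B C) = Val3.T ↔ (cstar α B = Val3.T ∨ cstar α C = Val3.T) := by
  rw [cstar_disj_def]; split <;> simp_all

lemma cstar_disj_F (α : DI9Val) (B C : Form) :
    cstar α (.disj B C) = Val3.F ↔ (cstar α B = Val3.F ∧ cstar α C = Val3.F) := by
  rw [cstar_disj_def]
  rcases cstar_tv α B with hb | hb <;> rcases cstar_tv α C with hc | hc <;>
    simp [hb, hc]

lemma isJExt_refl (α : DI9Val) (j : ℝ) : IsJExt α α j := fun _ _ _ => rfl

noncomputable def extend (α : DI9Val) (j : ℝ) (f : ℕ → Val3)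
    (hf : ∀ n, f n = Val3.T ∨ f n = Val3.F)
    (hT : ∀ n, α.val n j = Val3.T → f n = Val3.T)
    (hF : ∀ n, α.val n j = Val3.F → f n = Val3.F) : DI9Val where
  val n h := if h ≤ j then α.val n h else f n
  mono_T n a b hab h' := by
    by_cases hb : b ≤ j
    · have ha : a ≤ j := le_trans hab.le hb
      simp only [if_pos ha] at h'
      simp only [if_pos hb]
      exact α.mono_T n a b hab h'
    · simp only [if_neg hb]
      by_cases ha : a ≤ j
      · simp only [if_pos ha] at h'
        exact hT n (val_T_le α n ha h')
      · simpa only [if_neg ha] using h'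
  mono_F n a b hab h' := by
    by_cases hb : b ≤ j
    · have ha : a ≤ j := le_trans hab.le hb
      simp only [if_pos ha] at h'
      simp only [if_pos hb]
      exact α.mono_F n a b hab h'
    · simp only [if_neg hb]
      by_cases ha : a ≤ j
      · simp only [if_pos ha] at h'
        exact hF n (val_F_le α n ha h')
      · simpa only [if_neg ha] using h'
  eventually_tv n := ⟨j + 1, by
    simp only [if_neg (by linarith : ¬ (j + 1 ≤ j))]; exact hf n⟩

lemma extend_isJExt (α : DI9Val) (j : ℝ) (f : ℕ → Val3) (hf hT hF) :
    IsJExt (extend α j f hf hT hF) α j := by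
  intro n h hh
  simp only [extend, if_pos hh]

lemma extend_cstar_atom (α : DI9Val) (j : ℝ) (f : ℕ → Val3) (hf hT hF) (n : ℕ) :
    cstar (extend α j f hf hT hF) (.atom n) = Val3.T ↔ f n = Val3.T := by
  rw [cstar_atom_T]
  constructor
  · rintro ⟨h, hh⟩
    simp only [extend] at hh
    by_cases hle : h ≤ j
    · rw [if_pos hle] at hh
      exact hT n (val_T_le α n hle hh)
    · rwa [if_neg hle] at hh
  · intro h
    exact ⟨j + 1, by simp only [extend, if_neg (by linarith : ¬ (j + 1 ≤ j))]; exact h⟩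

lemma cstar_congr (α β : DI9Val)
    (h : ∀ n, cstar β (.atom n) = cstar α (.atom n)) :
    ∀ A : Form, cstar β A = cstar α A := by
  intro A
  induction A with
  | atom n => exact h n
  | neg B ih => rw [cstar_neg_def, cstar_neg_def, ih]
  | disj B C ih1 ih2 => rw [cstar_disj_def, cstar_disj_def, ih1, ih2]

lemma key (j : ℝ) (α : DI9Val) (A : Form) :
    (interp α A j = Val3.T ↔ ∀ β : DI9Val, IsJExt β α j → cstar β A = Val3.T) ∧
    (interp α A j = Val3.F ↔ ∀ β : DI9Val, IsJExt β α j → cstar β A = Val3.F) := by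
  induction A with
  | atom n =>
    constructor
    · constructor
      · intro h β hβ
        rw [cstar_atom_T]
        exact ⟨j, by rw [hβ n j le_rfl]; exact h⟩
      · intro h
        by_contra hne
        have hne' : α.val n j ≠ Val3.T := by simpa [interp] using hne
        set f : ℕ → Val3 := fun m => if α.val m j = Val3.T then Val3.T else Val3.F with hfdef
        have hf : ∀ m, f m = Val3.T ∨ f m = Val3.F := by
          intro m; simp only [hfdef]; split <;> simp
        have hT : ∀ m, α.val m j = Val3.T → f m = Val3.T := by
          intro m hm; simp [hfdef, hm]
        have hF : ∀ m, α.val m j = Val3.F → f m = Val3.F := by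
          intro m hm; simp [hfdef, hm]
        have := h (extend α j f hf hT hF) (extend_isJExt α j f hf hT hF)
        rw [extend_cstar_atom] at this
        simp only [hfdef, if_neg hne'] at this
        exact absurd this (by simp)
    · constructor
      · intro h β hβ
        have hαj : α.val n j = Val3.F := by simpa [interp] using h
        have : ¬ ∃ k : ℝ, β.val n k = Val3.T := by
          rintro ⟨k, hk⟩
          by_cases hle : k ≤ j
          · rw [hβ n k hle] at hk
            have := val_T_le α n hle hk
            simp [hαj] at this
          · have hj' : β.val n j = Val3.F := by rw [hβ n j le_rfl]; exact hαj
            have := β.mono_F n j k (by linarith [not_le.mp hle]) hj'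
            simp [hk] at this
        rcases cstar_tv β (.atom n) with h' | h'
        · rw [cstar_atom_T] at h'; exact absurd h' this
        · exact h'
      · intro h
        show α.val n j = Val3.F
        rcases h3 : α.val n j with _ | _ | _
        · -- α.val n j = T : α itself contradicts
          have := h α (isJExt_refl α j)
          have h' : cstar α (.atom n) = Val3.T := (cstar_atom_T α n).mpr ⟨j, h3⟩
          rw [h'] at this; exact absurd this (by simp)
        · rfl
        · -- α.val n j = O : build extension making atom n true
          exfalso
          set f : ℕ → Val3 := fun m =>
            if m = n then Val3.T else if α.val m j = Val3.T then Val3.T else Val3.F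
            with hfdef
          have hf : ∀ m, f m = Val3.T ∨ f m = Val3.F := by
            intro m; simp only [hfdef]; split <;> [simp; (split <;> simp)]
          have hT : ∀ m, α.val m j = Val3.T → f m = Val3.T := by
            intro m hm; simp only [hfdef]; split <;> simp [hm]
          have hF : ∀ m, α.val m j = Val3.F → f m = Val3.F := by
            intro m hm
            simp only [hfdef]
            have hmn : m ≠ n := by
              rintro rfl; rw [h3] at hm; exact absurd hm (by simp)
            rw [if_neg hmn, if_neg (by simp [hm])]
          have hc := h (extend α j f hf hT hF) (extend_isJExt α j f hf hT hF)
          have := (extend_cstar_atom α j f hf hT hF n).mpr (by simp [hfdef])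
          rw [this] at hc; exact absurd hc (by simp)
  | neg B ih =>
    obtain ⟨ihT, ihF⟩ := ih
    have h1 : interp α (.neg B) j = Val3.T ↔ interp α B j = Val3.F := by
      rw [interp_neg_def]
      rcases hB : interp α B j <;> simp
    have h2 : interp α (.neg B) j = Val3.F ↔ interp α B j = Val3.T := by
      rw [interp_neg_def]
      rcases hB : interp α B j <;> simp
    constructor
    · rw [h1, ihF]
      constructor
      · intro h β hβ; rw [cstar_neg_T]; exact h β hβ
      · intro h β hβ; rw [← cstar_neg_T]; exact h β hβ
    · rw [h2, ihT]
      constructor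
      · intro h β hβ; rw [cstar_neg_F]; exact h β hβ
      · intro h β hβ; rw [← cstar_neg_F]; exact h β hβ
  | disj B C ih1 ih2 =>
    have hd := interp_disj_def α B C j
    constructor
    · rw [hd]
      constructor
      · intro h β hβ
        rw [cstar_disj_T]
        by_cases hc : ∀ β : DI9Val, IsJExt β α j →
            (cstar β B = Val3.T ∨ cstar β C = Val3.T)
        · exact hc β hβ
        · rw [if_neg hc] at h
          split at h <;> exact absurd h (by simp)
      · intro h
        rw [if_pos (fun β hβ => (cstar_disj_T β B C).mp (h β hβ))]
    · rw [hd]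
      constructor
      · intro h β hβ
        rw [cstar_disj_F]
        by_cases hc : ∀ β : DI9Val, IsJExt β α j →
            (cstar β B = Val3.T ∨ cstar β C = Val3.T)
        · rw [if_pos hc] at h; exact absurd h (by simp)
        · rw [if_neg hc] at h
          by_cases hc2 : ∀ β : DI9Val, IsJExt β α j →
              (cstar β B = Val3.F ∧ cstar β C = Val3.F)
          · exact hc2 β hβ
          · rw [if_neg hc2] at h; exact absurd h (by simp)
      · intro h
        have hc2 : ∀ β : DI9Val, IsJExt β α j →
            (cstar β B = Val3.F ∧ cstar β C = Val3.F) :=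
          fun β hβ => (cstar_disj_F β B C).mp (h β hβ)
        have hc : ¬ ∀ β : DI9Val, IsJExt β α j →
            (cstar β B = Val3.T ∨ cstar β C = Val3.T) := by
          intro hc
          obtain ⟨h1, h2⟩ := hc2 α (isJExt_refl α j)
          rcases hc α (isJExt_refl α j) with h' | h' <;> simp_all
        rw [if_neg hc, if_pos hc2]

theorem stmt_12 (Γ : Set Form) (A : Form) :
    DI9Conseq Γ A ↔
      ∀ α : DI9Val, (∀ B ∈ Γ, cstar α B = Val3.T) → cstar α A = Val3.T := by
  constructor
  · intro H α hΓ
    -- constant valuation α'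
    set α' : DI9Val :=
      { val := fun n _ => if cstar α (.atom n) = Val3.T then Val3.T else Val3.F
        mono_T := fun n a b _ h => h
        mono_F := fun n a b _ h => h
        eventually_tv := fun n => ⟨0, by split <;> simp⟩ } with hα'
    have hatoms : ∀ β : DI9Val, IsJExt β α' 0 →
        ∀ n, cstar β (.atom n) = cstar α (.atom n) := by
      intro β hβ n
      have h0 : β.val n 0 = if cstar α (.atom n) = Val3.T then Val3.T else Val3.F :=
        hβ n 0 le_rfl
      rcases cstar_tv α (.atom n) with hc | hc
      · rw [hc]
        rw [cstar_atom_T]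
        exact ⟨0, by rw [h0, if_pos hc]⟩
      · rw [hc]
        rw [if_neg (by simp [hc])] at h0
        have : ¬ ∃ k : ℝ, β.val n k = Val3.T := by
          rintro ⟨k, hk⟩
          by_cases hle : k ≤ (0 : ℝ)
          · have hv : β.val n k = Val3.F := by
              rw [hβ n k hle]
              show (if cstar α (.atom n) = Val3.T then Val3.T else Val3.F) = Val3.F
              rw [if_neg (by simp [hc])]
            rw [hv] at hk; exact absurd hk (by simp)
          · have := β.mono_F n 0 k (by linarith [not_le.mp hle]) h0
            rw [hk] at this; exact absurd this (by simp)
        rcases cstar_tv β (.atom n) with h' | h'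
        · rw [cstar_atom_T] at h'; exact absurd h' this
        · exact h'
    have hcongr : ∀ β : DI9Val, IsJExt β α' 0 → ∀ C, cstar β C = cstar α C :=
      fun β hβ => cstar_congr α β (hatoms β hβ)
    have hhyp : ∀ B ∈ Γ, interp α' B 0 = Val3.T := by
      intro B hB
      rw [(key 0 α' B).1]
      intro β hβ
      rw [hcongr β hβ B]
      exact hΓ B hB
    have := H 0 α' hhyp
    rw [(key 0 α' A).1] at this
    have := this α' (isJExt_refl α' 0)
    rwa [hcongr α' (isJExt_refl α' 0) A] at this
  · intro H j α hΓ
    rw [(key j α A).1]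
    intro β hβ
    apply H β
    intro B hB
    exact ((key j α B).1.mp (hΓ B hB)) β hβ
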